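/- Let T > 0 and let f : ℝ → ℝ be càdlàg and of bounded variation on [0,T]. If Δf(s) > −1 for all s ∈ (0,T], then the right-jump-inversion of the left-jump-inversion of f equals f on [0,T], i.e. (f̄)~ = f pointwise on [0,T]. Similarly, if Δf(s) < 1 for all s ∈ (0,T], then the left-jump-inversion of the right-jump-inversion of f equals f on [0,T], i.e. (f̃)‾ = f pointwise on [0,T]. -/

import Mathlib

open Set Filter

/-- The jump of `f` at `s`: `f s` minus the left limit of `f` at `s`. -/
noncomputable def jumpAt (f : ℝ → ℝ) (s : ℝ) : ℝ := f s - Function.leftLim f s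

/-- `f` is càdlàg on `[0,T]`: right-continuous at each point of `[0,T]` and
possessing left limits at each point of `(0,T]`. -/
def CadlagOn (f : ℝ → ℝ) (T : ℝ) : Prop :=
  (∀ t ∈ Set.Icc (0 : ℝ) T, ContinuousWithinAt f (Set.Ici t) t) ∧
  (∀ s ∈ Set.Ioc (0 : ℝ) T,
    Filter.Tendsto f (nhdsWithin s (Set.Iio s)) (nhds (Function.leftLim f s)))

/-- The left-jump-inversion `f̄(t) = f(t) - ∑_{0<s≤t} (Δf s)² / (1 + Δf s)`. -/
noncomputable def leftJumpInversion (f : ℝ → ℝ) (t : ℝ) : ℝ :=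
  f t - ∑' s : Set.Ioc (0 : ℝ) t, (jumpAt f s) ^ 2 / (1 + jumpAt f s)

/-- The right-jump-inversion `f̃(t) = f(t) + ∑_{0<s≤t} (Δf s)² / (1 - Δf s)`. -/
noncomputable def rightJumpInversion (f : ℝ → ℝ) (t : ℝ) : ℝ :=
  f t + ∑' s : Set.Ioc (0 : ℝ) t, (jumpAt f s) ^ 2 / (1 - jumpAt f s)

open Function

/-! ### Auxiliary lemmas -/


/-- Finite sums of absolute jumps of a BV càdlàg function are bounded by the variation. -/
lemma sum_jump_le (T : ℝ) (f : ℝ → ℝ)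
    (hc : ∀ s ∈ Set.Ioc (0:ℝ) T, Tendsto f (nhdsWithin s (Set.Iio s)) (nhds (leftLim f s)))
    (hBV : BoundedVariationOn f (Set.Icc (0:ℝ) T)) (F : Finset ℝ) :
    ↑F ⊆ Set.Ioc (0:ℝ) T → ∀ b ∈ Set.Icc (0:ℝ) T, (∀ s ∈ F, s ≤ b) →
    ∀ ε > 0, ∑ s ∈ F, |jumpAt f s| ≤ (eVariationOn f (Set.Icc 0 b)).toReal + F.card * ε := by
  classical
  have hfin : ∀ {A : Set ℝ}, A ⊆ Set.Icc (0:ℝ) T → eVariationOn f A ≠ ⊤ := by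
    intro A hA
    exact ((eVariationOn.mono f hA).trans_lt (lt_top_iff_ne_top.2 hBV)).ne
  induction F using Finset.strongInduction with
  | _ F IH =>
  intro hFsub b hb hFb ε hε
  rcases F.eq_empty_or_nonempty with rfl | hne
  · simp [ENNReal.toReal_nonneg]
  set m := F.max' hne with hmdef
  have hmF : m ∈ F := F.max'_mem hne
  have hmT : m ∈ Set.Ioc (0:ℝ) T := hFsub hmF
  set F' := F.erase m with hF'def
  obtain ⟨c, hc0, hcm, hcF'⟩ : ∃ c, 0 ≤ c ∧ c < m ∧ ∀ s ∈ F', s ≤ c := by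
    rcases F'.eq_empty_or_nonempty with h' | h'
    · exact ⟨0, le_rfl, hmT.1, by simp [h']⟩
    · refine ⟨F'.max' h', le_of_lt (hFsub (F.erase_subset m (F'.max'_mem h'))).1, ?_,
        fun s hs => F'.le_max' s hs⟩
      exact lt_of_le_of_ne (F.le_max' _ (F.erase_subset _ (F'.max'_mem h')))
        (Finset.ne_of_mem_erase (F'.max'_mem h'))
  have hmem : Set.Ioo c m ∩ {u | dist (f u) (leftLim f m) < ε} ∈ nhdsWithin m (Set.Iio m) :=
    inter_mem (Ioo_mem_nhdsLT_of_mem ⟨hcm, le_rfl⟩)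
      ((hc m hmT) (Metric.ball_mem_nhds _ hε))
  obtain ⟨u, ⟨hcu, hum⟩, hudist⟩ := Filter.nonempty_of_mem hmem
  have hu0 : (0:ℝ) ≤ u := hc0.trans hcu.le
  have huT : u ∈ Set.Icc (0:ℝ) T := ⟨hu0, hum.le.trans hmT.2⟩
  have hjump : |jumpAt f m| ≤ dist (f m) (f u) + ε := by
    have h1 : |jumpAt f m| = dist (f m) (leftLim f m) := by rw [jumpAt, Real.dist_eq]
    have h2 := dist_triangle (f m) (f u) (leftLim f m)
    have h3 : dist (f u) (leftLim f m) < ε := hudist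
    linarith
  have hvar1 : eVariationOn f (Set.Icc u m) ≠ ⊤ := hfin (Set.Icc_subset_Icc hu0 hmT.2)
  have hdist : dist (f m) (f u) ≤ (eVariationOn f (Set.Icc u m)).toReal := by
    have h1 : edist (f m) (f u) ≤ eVariationOn f (Set.Icc u m) :=
      eVariationOn.edist_le f ⟨hum.le, le_rfl⟩ ⟨le_rfl, hum.le⟩
    have h2 := ENNReal.toReal_mono hvar1 h1
    rwa [edist_dist, ENNReal.toReal_ofReal dist_nonneg] at h2
  have hIH := IH F' (Finset.erase_ssubset hmF)
    (fun s hs => hFsub (F.erase_subset _ hs)) u huT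
    (fun s hs => (hcF' s hs).trans hcu.le) ε hε
  have hsplit : ∑ s ∈ F, |jumpAt f s| = |jumpAt f m| + ∑ s ∈ F', |jumpAt f s| :=
    (Finset.add_sum_erase F _ hmF).symm
  have hvar0u : eVariationOn f (Set.Icc 0 u) ≠ ⊤ := hfin (Set.Icc_subset_Icc le_rfl huT.2)
  have hvar0b : eVariationOn f (Set.Icc 0 b) ≠ ⊤ := hfin (Set.Icc_subset_Icc le_rfl hb.2)
  have hadd : (eVariationOn f (Set.Icc 0 u)).toReal + (eVariationOn f (Set.Icc u m)).toReal
      ≤ (eVariationOn f (Set.Icc 0 b)).toReal := by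
    have h2 : eVariationOn f (Set.Icc 0 u) + eVariationOn f (Set.Icc u m)
        = eVariationOn f (Set.Icc 0 m) := by
      have := eVariationOn.Icc_add_Icc f (s := Set.univ) hu0 hum.le (Set.mem_univ u)
      simpa using this
    have h3 : eVariationOn f (Set.Icc 0 m) ≤ eVariationOn f (Set.Icc 0 b) :=
      eVariationOn.mono f (Set.Icc_subset_Icc le_rfl (hFb m hmF))
    rw [← ENNReal.toReal_add hvar0u hvar1, h2]
    exact ENNReal.toReal_mono hvar0b h3
  have hcard : (F'.card : ℝ) + 1 = F.card := by
    have := Finset.card_erase_add_one hmF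
    exact_mod_cast this
  have hcard2 : (F'.card : ℝ) * ε + ε = F.card * ε := by rw [← hcard]; ring
  rw [hsplit]
  linarith

/-- The absolute jumps of a BV càdlàg function are summable. -/
lemma summable_jump (T : ℝ) (hT : 0 < T) (f : ℝ → ℝ)
    (hc : ∀ s ∈ Set.Ioc (0:ℝ) T, Tendsto f (nhdsWithin s (Set.Iio s)) (nhds (leftLim f s)))
    (hBV : BoundedVariationOn f (Set.Icc (0:ℝ) T)) :
    Summable ((Set.Ioc (0:ℝ) T).indicator (fun s => |jumpAt f s|)) := by
  classical
  apply summable_of_sum_le (c := (eVariationOn f (Set.Icc 0 T)).toReal)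
  · intro s
    exact Set.indicator_nonneg (fun _ _ => abs_nonneg _) s
  · intro u
    have heq : ∑ x ∈ u, (Set.Ioc (0:ℝ) T).indicator (fun s => |jumpAt f s|) x
        = ∑ x ∈ u.filter (· ∈ Set.Ioc (0:ℝ) T), |jumpAt f x| := by
      rw [Finset.sum_filter]
      apply Finset.sum_congr rfl
      intro x _
      by_cases hx : x ∈ Set.Ioc (0:ℝ) T <;> simp [Set.indicator_apply, hx]
    rw [heq]
    set G := u.filter (· ∈ Set.Ioc (0:ℝ) T) with hGdef
    have hGsub : ↑G ⊆ Set.Ioc (0:ℝ) T := by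
      intro x hx
      exact (Finset.mem_filter.1 hx).2
    refine le_of_forall_pos_le_add (fun ε hε => ?_)
    have h := sum_jump_le T f hc hBV G hGsub T ⟨hT.le, le_rfl⟩
      (fun s hs => (hGsub hs).2) (ε / (G.card + 1)) (by positivity)
    have h2 : (G.card : ℝ) * (ε / (G.card + 1)) ≤ ε := by
      rw [mul_div_assoc']
      rw [div_le_iff₀ (by positivity)]
      nlinarith [Nat.cast_nonneg (α := ℝ) G.card]
    linarith

/-- Comparison test allowing finitely many exceptions. -/
lemma summable_of_abs_le_outside {c J : ℝ → ℝ} (hJ : Summable J) (hJ0 : ∀ s, 0 ≤ J s)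
    (h : ∀ s, J s < 1/2 → |c s| ≤ J s) : Summable c := by
  classical
  have h2 : ∀ᶠ s in Filter.cofinite, J s < 1/2 :=
    hJ.tendsto_cofinite_zero.eventually_lt_const (by norm_num)
  have hfin : {s | ¬ J s < 1/2}.Finite := Filter.eventually_cofinite.mp h2
  rw [← hfin.summable_compl_iff]
  apply Summable.of_abs
  apply Summable.of_nonneg_of_le (g := fun x : {x // x ∉ {s | ¬ J s < 1/2}} => |c x|)
    (fun x => abs_nonneg _) (fun x => ?_)
    ((hfin.summable_compl_iff (f := J)).2 hJ)
  exact h x (not_not.1 x.2)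

/-- The jump-sum function tends, from the left at `m`, to the sum over `Ioo 0 m`. -/
lemma tendsto_sum_jumps {a : ℝ → ℝ} {T : ℝ}
    (ha : Summable ((Set.Ioc (0:ℝ) T).indicator (fun s => |a s|))) {m : ℝ}
    (hm : m ∈ Set.Ioc (0:ℝ) T) :
    Tendsto (fun t => ∑' s : Set.Ioc (0:ℝ) t, a s) (nhdsWithin m (Set.Iio m))
      (nhds (∑' s : Set.Ioo (0:ℝ) m, a s)) := by
  classical
  set g := (Set.Ioc (0:ℝ) T).indicator a with hgdef
  have habs : (fun s => |g s|) = (Set.Ioc (0:ℝ) T).indicator (fun s => |a s|) := by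
    funext s
    by_cases hs : s ∈ Set.Ioc (0:ℝ) T <;> simp [hgdef, Set.indicator_apply, hs]
  have hgabs : Summable (fun s => |g s|) := habs ▸ ha
  have hg : Summable g := hgabs.of_abs
  have hind : ∀ {A : Set ℝ}, A ⊆ Set.Ioc (0:ℝ) T → ∑' s : A, a s = ∑' s, A.indicator g s := by
    intro A hA
    rw [tsum_subtype A a]
    congr 1
    funext x
    by_cases hx : x ∈ A
    · simp [Set.indicator_of_mem hx, hgdef, Set.indicator_of_mem (hA hx)]
    · simp [Set.indicator_of_notMem hx]
  have hIooSub : Set.Ioo (0:ℝ) m ⊆ Set.Ioc (0:ℝ) T :=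
    Set.Ioo_subset_Ioc_self.trans (Set.Ioc_subset_Ioc_right hm.2)
  rw [hind hIooSub]
  rw [Metric.tendsto_nhdsWithin_nhds]
  intro ε hε
  obtain ⟨G, hG⟩ := summable_iff_vanishing.1 (habs ▸ ha) (Metric.ball 0 (ε/2))
    (Metric.ball_mem_nhds _ (by positivity))
  obtain ⟨l, hl0, hlm, hlG⟩ : ∃ l, 0 ≤ l ∧ l < m ∧ ∀ x ∈ G, x < m → x ≤ l := by
    set G' := G.filter (· < m) with hG'def
    rcases G'.eq_empty_or_nonempty with h' | h'
    · refine ⟨0, le_rfl, hm.1, fun x hx hxm => absurd ?_ (by simp [h'] : x ∉ G')⟩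
      exact Finset.mem_filter.2 ⟨hx, hxm⟩
    · refine ⟨max (G'.max' h') 0, le_max_right _ _, ?_, fun x hx hxm => ?_⟩
      · apply max_lt _ hm.1
        exact (Finset.mem_filter.1 (G'.max'_mem h')).2
      · exact le_max_of_le_left (G'.le_max' x (Finset.mem_filter.2 ⟨hx, hxm⟩))
  refine ⟨m - l, by linarith, fun t htm hdist => ?_⟩
  have htm' : t < m := htm
  have hlt : l < t := by
    rw [Real.dist_eq, abs_of_nonpos (by linarith)] at hdist
    linarith
  have ht0 : (0:ℝ) ≤ t := hl0.trans hlt.le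
  have htT : Set.Ioc (0:ℝ) t ⊆ Set.Ioc (0:ℝ) T :=
    Set.Ioc_subset_Ioc_right (htm'.le.trans hm.2)
  rw [hind htT]
  -- decompose
  have hdisj : Disjoint (Set.Ioc (0:ℝ) t) (Set.Ioo t m) := by
    rw [Set.disjoint_left]
    rintro x ⟨_, hx2⟩ ⟨hx3, _⟩
    exact absurd hx2 (not_le.2 hx3)
  have hunion : Set.Ioc (0:ℝ) t ∪ Set.Ioo t m = Set.Ioo (0:ℝ) m :=
    Set.Ioc_union_Ioo_eq_Ioo ht0 htm'
  have hdecomp : (Set.Ioo (0:ℝ) m).indicator g = fun s =>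
      (Set.Ioc (0:ℝ) t).indicator g s + (Set.Ioo t m).indicator g s := by
    rw [← hunion]
    exact Set.indicator_union_of_disjoint hdisj g
  have hs1 : Summable ((Set.Ioc (0:ℝ) t).indicator g) := hg.indicator _
  have hs2 : Summable ((Set.Ioo t m).indicator g) := hg.indicator _
  have hsum_eq : ∑' s, (Set.Ioo (0:ℝ) m).indicator g s
      = (∑' s, (Set.Ioc (0:ℝ) t).indicator g s) + ∑' s, (Set.Ioo t m).indicator g s := by
    rw [hdecomp]
    exact Summable.tsum_add hs1 hs2
  rw [Real.dist_eq, hsum_eq]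
  have habs_eq : (fun s => ‖(Set.Ioo t m).indicator g s‖) = (Set.Ioo t m).indicator fun s => |g s| := by
    funext x
    by_cases hx : x ∈ Set.Ioo t m
    · simp [Set.indicator_of_mem hx]
    · simp [Set.indicator_of_notMem hx]
  have hs3 : Summable ((Set.Ioo t m).indicator fun s => |g s|) := hgabs.indicator _
  have hbound : |∑' s, (Set.Ioo t m).indicator g s| ≤ ε/2 := by
    have h1 : ‖∑' s, (Set.Ioo t m).indicator g s‖ ≤ ∑' s, ‖(Set.Ioo t m).indicator g s‖ :=
      norm_tsum_le_tsum_norm (by rw [habs_eq]; exact hs3)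
    rw [Real.norm_eq_abs] at h1
    refine h1.trans ?_
    have h2 : (fun s => ‖(Set.Ioo t m).indicator g s‖) = (Set.Ioo t m).indicator fun s => |g s| :=
      habs_eq
    rw [h2]
    apply Summable.tsum_le_of_sum_le hs3
    intro H
    classical
    have heq2 : ∑ x ∈ H, (Set.Ioo t m).indicator (fun s => |g s|) x
        = ∑ x ∈ H.filter (· ∈ Set.Ioo t m), |g x| := by
      rw [Finset.sum_filter]
      apply Finset.sum_congr rfl
      intro x _
      by_cases hx : x ∈ Set.Ioo t m <;> simp [Set.indicator_apply, hx]
    rw [heq2]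
    have hHdisj : Disjoint (H.filter (· ∈ Set.Ioo t m)) G := by
      rw [Finset.disjoint_left]
      intro x hx hxG
      have hx2 := (Finset.mem_filter.1 hx).2
      have := hlG x hxG hx2.2
      linarith [hx2.1]
    have h3 := hG _ hHdisj
    rw [Metric.mem_ball, Real.dist_eq, sub_zero] at h3
    exact (le_abs_self _).trans h3.le
  calc |∑' s, (Set.Ioc (0:ℝ) t).indicator g s -
        ((∑' s, (Set.Ioc (0:ℝ) t).indicator g s) + ∑' s, (Set.Ioo t m).indicator g s)|
      = |∑' s, (Set.Ioo t m).indicator g s| := by rw [abs_sub_comm]; ring_nf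
    _ ≤ ε/2 := hbound
    _ < ε := by linarith

/-- The jump of `f + (jump-sum)` at `m`. -/
lemma jumpAt_add_sum {T : ℝ} {f a : ℝ → ℝ}
    (hc : ∀ s ∈ Set.Ioc (0:ℝ) T, Tendsto f (nhdsWithin s (Set.Iio s)) (nhds (leftLim f s)))
    (ha : Summable ((Set.Ioc (0:ℝ) T).indicator (fun s => |a s|)))
    {m : ℝ} (hm : m ∈ Set.Ioc (0:ℝ) T) :
    jumpAt (fun t => f t + ∑' s : Set.Ioc (0:ℝ) t, a ↑s) m = jumpAt f m + a m := by
  classical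
  set g := (Set.Ioc (0:ℝ) T).indicator a with hgdef
  have habs : (fun s => |g s|) = (Set.Ioc (0:ℝ) T).indicator (fun s => |a s|) := by
    funext s
    by_cases hs : s ∈ Set.Ioc (0:ℝ) T
    · simp [hgdef, Set.indicator_of_mem hs]
    · simp [hgdef, Set.indicator_of_notMem hs]
  have hgabs : Summable (fun s => |g s|) := habs ▸ ha
  have hg : Summable g := hgabs.of_abs
  have hind : ∀ {A : Set ℝ}, A ⊆ Set.Ioc (0:ℝ) T →
      ∑' s : A, a ↑s = ∑' s, A.indicator g s := by
    intro A hA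
    rw [tsum_subtype A a]
    congr 1
    funext x
    by_cases hx : x ∈ A
    · simp [Set.indicator_of_mem hx, hgdef, Set.indicator_of_mem (hA hx)]
    · simp [Set.indicator_of_notMem hx]
  have h1 : Tendsto (fun t => f t + ∑' s : Set.Ioc (0:ℝ) t, a ↑s) (nhdsWithin m (Set.Iio m))
      (nhds (leftLim f m + ∑' s : Set.Ioo (0:ℝ) m, a ↑s)) :=
    (hc m hm).add (tendsto_sum_jumps ha hm)
  have hne : nhdsWithin m (Set.Iio m) ≠ ⊥ := (nhdsLT_neBot m).ne
  have h2 := leftLim_eq_of_tendsto h1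
  -- split the sum over Ioc 0 m
  have hIooSub : Set.Ioo (0:ℝ) m ⊆ Set.Ioc (0:ℝ) T :=
    Set.Ioo_subset_Ioc_self.trans (Set.Ioc_subset_Ioc_right hm.2)
  have hIocSub : Set.Ioc (0:ℝ) m ⊆ Set.Ioc (0:ℝ) T := Set.Ioc_subset_Ioc_right hm.2
  have hsplit : ∑' s : Set.Ioc (0:ℝ) m, a ↑s = a m + ∑' s : Set.Ioo (0:ℝ) m, a ↑s := by
    rw [hind hIocSub, hind hIooSub]
    have hunion : Set.Ioc (0:ℝ) m = {m} ∪ Set.Ioo (0:ℝ) m := by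
      rw [Set.union_comm, Set.union_singleton, Set.Ioo_insert_right hm.1]
    have hdisj : Disjoint ({m} : Set ℝ) (Set.Ioo (0:ℝ) m) := by
      rw [Set.disjoint_left]
      rintro x rfl ⟨_, hx2⟩
      exact lt_irrefl _ hx2
    rw [hunion, Set.indicator_union_of_disjoint hdisj]
    rw [Summable.tsum_add (hg.indicator _) (hg.indicator _)]
    congr 1
    have : ({m} : Set ℝ).indicator g = fun s => if s = m then g m else 0 := by
      funext x
      by_cases hx : x = m
      · subst hx; simp
      · simp [Set.indicator_of_notMem, hx]
    rw [this, tsum_ite_eq m (fun _ => g m)]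
    simp [hgdef, Set.indicator_of_mem hm]
  rw [jumpAt, jumpAt, h2, hsplit]
  ring

/-- Summability of correction terms. -/
lemma summable_corr {T : ℝ} {f : ℝ → ℝ} {d : ℝ → ℝ}
    (hJ : Summable ((Set.Ioc (0:ℝ) T).indicator (fun s => |jumpAt f s|)))
    (hd : ∀ s, |jumpAt f s| < 1/2 → 1/2 ≤ |d s|) :
    Summable ((Set.Ioc (0:ℝ) T).indicator (fun s => |(jumpAt f s)^2 / d s|)) := by
  apply summable_of_abs_le_outside hJ
    (fun s => Set.indicator_nonneg (fun _ _ => abs_nonneg _) s)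
  intro s hs
  by_cases hmem : s ∈ Set.Ioc (0:ℝ) T
  · rw [Set.indicator_of_mem hmem] at hs ⊢
    rw [Set.indicator_of_mem hmem]
    rw [abs_abs]
    have hdd := hd s hs
    have hd0 : (0:ℝ) < |d s| := by linarith
    rw [abs_div, abs_of_nonneg (sq_nonneg _), div_le_iff₀ hd0]
    nlinarith [sq_abs (jumpAt f s), abs_nonneg (jumpAt f s)]
  · rw [Set.indicator_of_notMem hmem] at hs ⊢
    rw [Set.indicator_of_notMem hmem]
    simp

/-- For `f` càdlàg of bounded variation on `[0,T]`: if all jumps of `f`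
on `(0,T]` are `> -1`, then the right-jump-inversion of the left-jump-inversion of `f`
equals `f` on `[0,T]`; and if all jumps are `< 1`, then the left-jump-inversion of the
right-jump-inversion of `f` equals `f` on `[0,T]`. -/
theorem jumpInversion_involutive
    (T : ℝ) (hT : 0 < T) (f : ℝ → ℝ)
    (hc : CadlagOn f T) (hBV : BoundedVariationOn f (Set.Icc (0 : ℝ) T)) :
    ((∀ s ∈ Set.Ioc (0 : ℝ) T, -1 < jumpAt f s) →
      ∀ t ∈ Set.Icc (0 : ℝ) T, rightJumpInversion (leftJumpInversion f) t = f t) ∧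
    ((∀ s ∈ Set.Ioc (0 : ℝ) T, jumpAt f s < 1) →
      ∀ t ∈ Set.Icc (0 : ℝ) T, leftJumpInversion (rightJumpInversion f) t = f t) := by
  have hJ := summable_jump T hT f hc.2 hBV
  constructor
  · -- left then right
    intro hpos t ht
    set a : ℝ → ℝ := fun s => (jumpAt f s)^2/(1 + jumpAt f s) with hadef
    have hd : ∀ s, |jumpAt f s| < 1/2 → 1/2 ≤ |1 + jumpAt f s| := by
      intro s hs
      obtain ⟨h1, h2⟩ := abs_lt.1 hs
      rw [abs_of_pos (by linarith)]
      linarith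
    have ha : Summable ((Set.Ioc (0:ℝ) T).indicator fun s => |a s|) := summable_corr hJ hd
    have hna : Summable ((Set.Ioc (0:ℝ) T).indicator fun s => |(fun u => -(a u)) s|) := by
      have : (fun s => |(fun u => -(a u)) s|) = fun s => |a s| := by
        funext x; simp
      rw [this]
      exact ha
    have hFdef : leftJumpInversion f = fun u => f u + ∑' s : Set.Ioc (0:ℝ) u, (fun v => -(a v)) ↑s := by
      funext u
      rw [leftJumpInversion]
      rw [show (∑' s : Set.Ioc (0:ℝ) u, (fun v => -(a v)) ↑s) = -∑' s : Set.Ioc (0:ℝ) u, a ↑s from tsum_neg]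
      rw [hadef]
      ring
    have hjF : ∀ s ∈ Set.Ioc (0:ℝ) T, jumpAt (leftJumpInversion f) s = jumpAt f s - a s := by
      intro s hs
      rw [hFdef, jumpAt_add_sum hc.2 hna hs]
      ring
    have hterm : ∀ s : Set.Ioc (0:ℝ) t,
        (jumpAt (leftJumpInversion f) ↑s)^2 / (1 - jumpAt (leftJumpInversion f) ↑s)
          = (jumpAt f ↑s)^2/(1 + jumpAt f ↑s) := by
      rintro ⟨s, hs⟩
      have hsT : s ∈ Set.Ioc (0:ℝ) T := ⟨hs.1, hs.2.trans ht.2⟩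
      have hx : -1 < jumpAt f s := hpos s hsT
      rw [hjF s hsT]
      simp only [hadef]
      set x := jumpAt f s with hxdef
      have hx0 : 1 + x ≠ 0 := ne_of_gt (by linarith)
      have e1 : x - x^2/(1+x) = x/(1+x) := by field_simp; ring
      have e2 : 1 - x/(1+x) = 1/(1+x) := by field_simp; ring
      rw [e1, e2]
      field_simp
    calc rightJumpInversion (leftJumpInversion f) t
        = leftJumpInversion f t + ∑' s : Set.Ioc (0:ℝ) t, (jumpAt f ↑s)^2/(1 + jumpAt f ↑s) := by
          rw [rightJumpInversion, tsum_congr hterm]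
      _ = f t := by rw [leftJumpInversion]; ring
  · -- right then left
    intro hpos t ht
    set b : ℝ → ℝ := fun s => (jumpAt f s)^2/(1 - jumpAt f s) with hbdef
    have hd : ∀ s, |jumpAt f s| < 1/2 → 1/2 ≤ |1 - jumpAt f s| := by
      intro s hs
      obtain ⟨h1, h2⟩ := abs_lt.1 hs
      rw [abs_of_pos (by linarith)]
      linarith
    have hb : Summable ((Set.Ioc (0:ℝ) T).indicator fun s => |b s|) := summable_corr hJ hd
    have hFdef : rightJumpInversion f = fun u => f u + ∑' s : Set.Ioc (0:ℝ) u, b ↑s := by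
      funext u
      rw [rightJumpInversion, hbdef]
    have hjF : ∀ s ∈ Set.Ioc (0:ℝ) T, jumpAt (rightJumpInversion f) s = jumpAt f s + b s := by
      intro s hs
      rw [hFdef, jumpAt_add_sum hc.2 hb hs]
    have hterm : ∀ s : Set.Ioc (0:ℝ) t,
        (jumpAt (rightJumpInversion f) ↑s)^2 / (1 + jumpAt (rightJumpInversion f) ↑s)
          = (jumpAt f ↑s)^2/(1 - jumpAt f ↑s) := by
      rintro ⟨s, hs⟩
      have hsT : s ∈ Set.Ioc (0:ℝ) T := ⟨hs.1, hs.2.trans ht.2⟩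
      have hx : jumpAt f s < 1 := hpos s hsT
      rw [hjF s hsT]
      simp only [hbdef]
      set x := jumpAt f s with hxdef
      have hx0 : 1 - x ≠ 0 := ne_of_gt (by linarith)
      have e1 : x + x^2/(1-x) = x/(1-x) := by field_simp; ring
      have e2 : 1 + x/(1-x) = 1/(1-x) := by field_simp; ring
      rw [e1, e2]
      field_simp
    calc leftJumpInversion (rightJumpInversion f) t
        = rightJumpInversion f t - ∑' s : Set.Ioc (0:ℝ) t, (jumpAt f ↑s)^2/(1 - jumpAt f ↑s) := by
          rw [leftJumpInversion, tsum_congr hterm]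
      _ = f t := by rw [rightJumpInversion]; ring
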